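/- Let τ be a finite type over Ω. Then for all countable ordinals α and γ: Iter_α^{τ→τ}(Iter_γ^τ) =hp Iter_{γ^α}^τ, where γ^α is ordinal exponentiation and Iter_α^{τ→τ} is the α-iteration functional at type τ→τ applied to the type-τ iteration functional Iter_γ^τ. -/

import Mathlib

/-!  Framework: finite type structure over Ω = countable ordinals,
     limsup/liminf, transfinite iteration functionals, hereditarily
     positive and hereditarily monotone functionals. -/

noncomputable section
namespace IterOrd

open Ordinal

theorem omega1_pos : (0 : Ordinal) < ω₁ := Ordinal.omega0_pos.trans Ordinal.omega0_lt_omega_one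

/-- `Om` is Ω, the set of countable ordinals (ordinals `< ω₁`). -/
abbrev Om : Type 1 := {o : Ordinal // o < ω₁}

/-- Infimum of a subset of Ω (the minimum for nonempty sets; `0` for `∅`). -/
def infOm (s : Set Om) : Om :=
  ⟨sInf (Subtype.val '' s), by
    rcases (Subtype.val '' s).eq_empty_or_nonempty with h | h
    · rw [h]; simpa using omega1_pos
    · obtain ⟨x, _, he⟩ := csInf_mem h
      exact he ▸ x.2⟩

/-- Supremum of a subset of Ω.  Whenever the supremum of the set exists in Ω
(in particular for every countable subset, by regularity of `ω₁`) this is the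
genuine supremum; otherwise it takes a junk value. -/
def supOm (s : Set Om) : Om :=
  if h : sSup (Subtype.val '' s) < ω₁ then ⟨sSup (Subtype.val '' s), h⟩ else ⟨0, omega1_pos⟩

/-- Finite types over the base type `o` (interpreted as Ω). -/
inductive Ty : Type
  | base : Ty
  | arrow : Ty → Ty → Ty
deriving DecidableEq

/-- The full type structure over Ω: `El base = Ω` and
`El (arrow σ τ)` is the set of all functions `El σ → El τ`. -/
@[reducible] def El : Ty → Type 1
  | .base => Om
  | .arrow σ τ => El σ → El τ

/-- The order on each `El σ`: the ordinal order at base type, pointwise at arrow types. -/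
def Le : (σ : Ty) → El σ → El σ → Prop
  | .base => fun x y => x ≤ y
  | .arrow σ τ => fun f g => ∀ x : El σ, Le τ (f x) (g x)

/-- Suprema, computed pointwise at function types. -/
def supEl : (σ : Ty) → Set (El σ) → El σ
  | .base => supOm
  | .arrow σ τ => fun S (x : El σ) => supEl τ ((fun f : El (.arrow σ τ) => f x) '' S)

/-- Infima, computed pointwise at function types. -/
def infEl : (σ : Ty) → Set (El σ) → El σ
  | .base => infOm
  | .arrow σ τ => fun S (x : El σ) => infEl τ ((fun f : El (.arrow σ τ) => f x) '' S)

/-- `limsup_{ξ→ζ} f ξ = inf_{γ<ζ} sup_{γ≤ξ<ζ} f ξ`. -/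
def limsupEl (σ : Ty) (ζ : Ordinal) (f : ∀ ξ : Ordinal, ξ < ζ → El σ) : El σ :=
  infEl σ {y | ∃ γ, ∃ _ : γ < ζ, y = supEl σ {z | ∃ ξ, ∃ h : ξ < ζ, γ ≤ ξ ∧ z = f ξ h}}

/-- `liminf_{ξ→ζ} f ξ = sup_{γ<ζ} inf_{γ≤ξ<ζ} f ξ`. -/
def liminfEl (σ : Ty) (ζ : Ordinal) (f : ∀ ξ : Ordinal, ξ < ζ → El σ) : El σ :=
  supEl σ {y | ∃ γ, ∃ _ : γ < ζ, y = infEl σ {z | ∃ ξ, ∃ h : ξ < ζ, γ ≤ ξ ∧ z = f ξ h}}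

/-- `limsup` of a ζ-indexed sequence of ordinals. -/
def oLimsup (ζ : Ordinal) (a : Ordinal → Ordinal) : Ordinal :=
  sInf {s | ∃ γ, γ < ζ ∧ s = sSup (a '' {ξ | γ ≤ ξ ∧ ξ < ζ})}

/-- `liminf` of a ζ-indexed sequence of ordinals. -/
def oLiminf (ζ : Ordinal) (a : Ordinal → Ordinal) : Ordinal :=
  sSup {s | ∃ γ, γ < ζ ∧ s = sInf (a '' {ξ | γ ≤ ξ ∧ ξ < ζ})}

/-- The α-iteration functional of type σ:
`Iter 0 f x = x`, `Iter (α+1) f x = f (Iter α f x)`, and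
`Iter μ f x = limsup_{ξ→μ} Iter ξ f x` for limit μ. -/
def Iter (σ : Ty) (α : Ordinal) : (El σ → El σ) → El σ → El σ :=
  Ordinal.limitRecOn (motive := fun _ => (El σ → El σ) → El σ → El σ) α
    (fun _ x => x)
    (fun _ ih f x => f (ih f x))
    (fun μ _ ih f x => limsupEl σ μ (fun ξ h => ih ξ h f x))

/-- The pair (hereditarily positive, ≤hp), defined simultaneously by recursion on the type.
Every element of `Ω` and of `Ω_{ρ→τ}` with `ρ ≠ τ` is h.p., and `≤hp` there is `≤`;
`f : Ω_{τ→τ}` is h.p. iff it preserves h.p., is inflationary on h.p. arguments and is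
monotone (w.r.t. `≤hp`) on h.p. arguments; `f ≤hp f'` on `Ω_{τ→τ}` iff `f x ≤hp f' x`
for every h.p. `x`. -/
def HPaux : (σ : Ty) → (El σ → Prop) × (El σ → El σ → Prop)
  | .base => ⟨fun _ => True, fun x y => x ≤ y⟩
  | .arrow ρ τ =>
      ⟨fun f =>
        if h : ρ = τ then
          (∀ x, (HPaux ρ).1 x → (HPaux τ).1 (f x)) ∧
          (∀ x, (HPaux ρ).1 x → (HPaux τ).2 (cast (congrArg El h) x) (f x)) ∧
          (∀ x y, (HPaux ρ).1 x → (HPaux ρ).1 y → (HPaux ρ).2 x y → (HPaux τ).2 (f x) (f y))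
        else True,
       fun f g =>
        if ρ = τ then ∀ x, (HPaux ρ).1 x → (HPaux τ).2 (f x) (g x)
        else Le (.arrow ρ τ) f g⟩

/-- Hereditarily positive functionals. -/
def Hp (σ : Ty) : El σ → Prop := (HPaux σ).1

/-- The order `≤hp`. -/
def HpLe (σ : Ty) : El σ → El σ → Prop := (HPaux σ).2

/-- `f =hp g` iff `f ≤hp g` and `g ≤hp f`. -/
def HpEq (σ : Ty) (f g : El σ) : Prop := HpLe σ f g ∧ HpLe σ g f

/-- The pair (hereditarily monotone, ≤ on the hereditarily monotone structure),
by recursion on the type.  `f` is hereditarily monotone iff it maps hereditarily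
monotone arguments to hereditarily monotone values, monotonically; the order is
pointwise over hereditarily monotone arguments (i.e. the order of `Ω^mon`). -/
def HMaux : (σ : Ty) → (El σ → Prop) × (El σ → El σ → Prop)
  | .base => ⟨fun _ => True, fun x y => x ≤ y⟩
  | .arrow σ τ =>
      ⟨fun f =>
        (∀ x, (HMaux σ).1 x → (HMaux τ).1 (f x)) ∧
        (∀ x y, (HMaux σ).1 x → (HMaux σ).1 y → (HMaux σ).2 x y → (HMaux τ).2 (f x) (f y)),
       fun f g => ∀ x, (HMaux σ).1 x → (HMaux τ).2 (f x) (g x)⟩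

/-- Hereditarily monotone functionals: the members of the type structure `Ω^mon`. -/
def HM (σ : Ty) : El σ → Prop := (HMaux σ).1

/-- The (pointwise) order of the hereditarily monotone type structure `Ω^mon`. -/
def LeHM (σ : Ty) : El σ → El σ → Prop := (HMaux σ).2

/-- Equality in the hereditarily monotone type structure `Ω^mon`. -/
def EqHM (σ : Ty) (f g : El σ) : Prop := LeHM σ f g ∧ LeHM σ g f

/-! ### Infrastructure -/

open Cardinal in
theorem om_sSup_lt {s : Set Ordinal} (hc : s.Countable) (hs : ∀ x ∈ s, x < ω₁) :
    sSup s < ω₁ := by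
  rcases s.eq_empty_or_nonempty with rfl | hne
  · simpa using omega1_pos
  · obtain ⟨f, rfl⟩ := hc.exists_eq_range hne
    rw [sSup_range]
    exact Ordinal.iSup_lt_omega_one (fun n => hs _ (Set.mem_range_self n))

open Cardinal in
theorem Iio_countable {ζ : Ordinal} (h : ζ < ω₁) : (Set.Iio ζ).Countable := by
  rw [Cardinal.countable_iff_lt_aleph_one, Ordinal.mk_Iio_ordinal, lift_lt_aleph_one]
  rwa [← lt_ord, Cardinal.ord_aleph]

open Cardinal in
theorem add_lt_om1 {β δ : Ordinal} (hβ : β < ω₁) (hδ : δ < ω₁) : β + δ < ω₁ := by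
  rw [← Cardinal.ord_aleph, lt_ord, Ordinal.card_add] at *
  exact add_lt_of_lt aleph0_lt_aleph_one.le hβ hδ

open Cardinal in
theorem mul_lt_om1 {β δ : Ordinal} (hβ : β < ω₁) (hδ : δ < ω₁) : β * δ < ω₁ := by
  rw [← Cardinal.ord_aleph, lt_ord, Ordinal.card_mul] at *
  exact mul_lt_of_lt aleph0_lt_aleph_one.le hβ hδ

theorem one_lt_om1 : (1 : Ordinal) < ω₁ :=
  lt_trans Ordinal.one_lt_omega0 Ordinal.omega0_lt_omega_one

open Cardinal in
theorem opow_lt_om1 {γ α : Ordinal} (hγ : γ < ω₁) (hα : α < ω₁) : γ ^ α < ω₁ := by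
  induction α using Ordinal.induction with
  | _ α IH =>
    rcases Ordinal.zero_or_succ_or_isSuccLimit α with rfl | ⟨α', rfl⟩ | hlim
    · simpa using one_lt_om1
    · rw [Ordinal.opow_succ]
      exact mul_lt_om1 (IH α' (Order.lt_succ α') (lt_trans (Order.lt_succ α') hα)) hγ
    · rcases eq_or_ne γ 0 with rfl | hγ0
      · rw [Ordinal.zero_opow hlim.pos.ne']; exact omega1_pos
      · rw [Ordinal.opow_limit hγ0 hlim]
        haveI := (Iio_countable hα).to_subtype
        exact Ordinal.iSup_lt_omega_one (fun ξ => IH ξ.1 ξ.2 (lt_trans ξ.2 hα))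

/-- A default element of each type. -/
def dEl : (σ : Ty) → El σ
  | .base => ⟨0, omega1_pos⟩
  | .arrow _ τ => fun _ => dEl τ

theorem le_refl' : ∀ σ (x : El σ), Le σ x x
  | .base, _ => le_rfl
  | .arrow _ τ, f => fun a => le_refl' τ (f a)

theorem le_trans' : ∀ σ {x y z : El σ}, Le σ x y → Le σ y z → Le σ x z
  | .base, _, _, _, h, h' => le_trans h h'
  | .arrow _ τ, _, _, _, h, h' => fun a => le_trans' τ (h a) (h' a)

theorem hp_base (x : El .base) : Hp .base x := trivial

theorem hp_arrow_ne {ρ τ : Ty} (h : ρ ≠ τ) (f : El (.arrow ρ τ)) : Hp (.arrow ρ τ) f := by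
  simp [Hp, HPaux, h]

theorem hp_arrow_iff {τ : Ty} {f : El (.arrow τ τ)} :
    Hp (.arrow τ τ) f ↔
      (∀ x, Hp τ x → Hp τ (f x)) ∧ (∀ x, Hp τ x → HpLe τ x (f x)) ∧
      (∀ x y, Hp τ x → Hp τ y → HpLe τ x y → HpLe τ (f x) (f y)) := by
  show (dite _ _ _ : Prop) ↔ _
  rw [dif_pos rfl]
  exact Iff.rfl

theorem hpLe_arrow_ne {ρ τ : Ty} (h : ρ ≠ τ) {f g : El (.arrow ρ τ)} :
    HpLe (.arrow ρ τ) f g ↔ Le (.arrow ρ τ) f g := by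
  show (ite _ _ _ : Prop) ↔ _
  rw [if_neg h]

theorem hpLe_arrow_iff {τ : Ty} {f g : El (.arrow τ τ)} :
    HpLe (.arrow τ τ) f g ↔ ∀ x, Hp τ x → HpLe τ (f x) (g x) := by
  show (ite _ _ _ : Prop) ↔ _
  rw [if_pos rfl]
  exact Iff.rfl

theorem hpLe_refl : ∀ σ (x : El σ), HpLe σ x x
  | .base, _ => le_rfl
  | .arrow ρ τ, f => by
    by_cases h : ρ = τ
    · subst h
      exact hpLe_arrow_iff.2 fun a _ => hpLe_refl ρ (f a)
    · exact (hpLe_arrow_ne h).2 (le_refl' _ f)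

theorem hpLe_trans : ∀ σ {x y z : El σ}, HpLe σ x y → HpLe σ y z → HpLe σ x z
  | .base, _, _, _, h, h' => le_trans h h'
  | .arrow ρ τ, f, g, k, h, h' => by
    by_cases hρτ : ρ = τ
    · subst hρτ
      rw [hpLe_arrow_iff] at *
      exact fun a ha => hpLe_trans ρ (h a ha) (h' a ha)
    · rw [hpLe_arrow_ne hρτ] at *
      exact le_trans' _ h h'

theorem le_hpLe : ∀ σ {x y : El σ}, Le σ x y → HpLe σ x y
  | .base, _, _, h => h
  | .arrow ρ τ, f, g, h => by
    by_cases hρτ : ρ = τ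
    · subst hρτ
      exact hpLe_arrow_iff.2 fun a _ => le_hpLe ρ (h a)
    · exact (hpLe_arrow_ne hρτ).2 h

theorem Hp.maps {τ : Ty} {f : El (.arrow τ τ)} (hf : Hp (.arrow τ τ) f) {x : El τ}
    (hx : Hp τ x) : Hp τ (f x) := (hp_arrow_iff.1 hf).1 x hx

theorem Hp.infl {τ : Ty} {f : El (.arrow τ τ)} (hf : Hp (.arrow τ τ) f) {x : El τ}
    (hx : Hp τ x) : HpLe τ x (f x) := (hp_arrow_iff.1 hf).2.1 x hx

theorem Hp.mono {τ : Ty} {f : El (.arrow τ τ)} (hf : Hp (.arrow τ τ) f) {x y : El τ}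
    (hx : Hp τ x) (hy : Hp τ y) (hxy : HpLe τ x y) : HpLe τ (f x) (f y) :=
  (hp_arrow_iff.1 hf).2.2 x y hx hy hxy

theorem hpEq_refl {σ : Ty} (x : El σ) : HpEq σ x x := ⟨hpLe_refl σ x, hpLe_refl σ x⟩

theorem HpEq.symm {σ : Ty} {x y : El σ} (h : HpEq σ x y) : HpEq σ y x := ⟨h.2, h.1⟩

theorem HpEq.trans {σ : Ty} {x y z : El σ} (h : HpEq σ x y) (h' : HpEq σ y z) : HpEq σ x z :=
  ⟨hpLe_trans σ h.1 h'.1, hpLe_trans σ h'.2 h.2⟩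

theorem hp_congr {τ : Ty} {f : El (.arrow τ τ)} (hf : Hp (.arrow τ τ) f) {x y : El τ}
    (hx : Hp τ x) (hy : Hp τ y) (h : HpEq τ x y) : HpEq τ (f x) (f y) :=
  ⟨hf.mono hx hy h.1, hf.mono hy hx h.2⟩
/-! ### Suprema, infima and limsup -/

/-- Tail sets appearing in `limsupEl`. -/
def tails (σ : Ty) (ζ : Ordinal) (u : ∀ ξ : Ordinal, ξ < ζ → El σ) (γ : Ordinal) :
    Set (El σ) :=
  {z | ∃ ξ, ∃ h : ξ < ζ, γ ≤ ξ ∧ z = u ξ h}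

theorem limsupEl_eq (σ : Ty) (ζ : Ordinal) (u : ∀ ξ : Ordinal, ξ < ζ → El σ) :
    limsupEl σ ζ u = infEl σ {y | ∃ γ, ∃ _ : γ < ζ, y = supEl σ (tails σ ζ u γ)} := rfl

theorem tails_countable {σ : Ty} {ζ γ : Ordinal} {u : ∀ ξ : Ordinal, ξ < ζ → El σ}
    (hζ : ζ < ω₁) : (tails σ ζ u γ).Countable := by
  refine Set.Countable.mono ?_
    ((Iio_countable hζ).image (fun ξ => if h : ξ < ζ then u ξ h else dEl σ))
  rintro z ⟨ξ, h, hγ, rfl⟩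
  exact ⟨ξ, h, by show dite _ _ _ = _; rw [dif_pos h]⟩

theorem le_supEl : ∀ (σ : Ty) {S : Set (El σ)}, S.Countable → ∀ {x}, x ∈ S →
    Le σ x (supEl σ S)
  | .base, S, hS, x, hx => by
    have hlt : sSup (Subtype.val '' S) < ω₁ :=
      om_sSup_lt (hS.image _) (by rintro _ ⟨y, _, rfl⟩; exact y.2)
    show x ≤ supOm S
    rw [supOm, dif_pos hlt, ← Subtype.coe_le_coe]
    exact le_csSup ⟨ω₁, by rintro _ ⟨y, _, rfl⟩; exact (y.2).le⟩ ⟨x, hx, rfl⟩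
  | .arrow ρ τ, S, hS, f, hf => fun a => le_supEl τ (hS.image _) ⟨f, hf, rfl⟩

theorem supEl_le : ∀ (σ : Ty) {S : Set (El σ)} {b}, (∀ x ∈ S, Le σ x b) →
    Le σ (supEl σ S) b
  | .base, S, b, hb => by
    show supOm S ≤ b
    rw [supOm]
    have key : sSup (Subtype.val '' S) ≤ b.val := by
      rcases (Subtype.val '' S).eq_empty_or_nonempty with he | hne
      · rw [he, csSup_empty]; exact bot_le
      · exact csSup_le hne (by rintro _ ⟨y, hy, rfl⟩; exact hb y hy)
    split
    · next h => exact key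
    · next => rw [← Subtype.coe_le_coe]; exact zero_le
  | .arrow ρ τ, S, b, hb => fun a =>
    supEl_le τ (by rintro _ ⟨f, hf, rfl⟩; exact hb f hf a)

theorem infEl_le : ∀ (σ : Ty) {S : Set (El σ)} {x}, x ∈ S → Le σ (infEl σ S) x
  | .base, S, x, hx => by
    show infOm S ≤ x
    rw [← Subtype.coe_le_coe]
    exact csInf_le (OrderBot.bddBelow _) ⟨x, hx, rfl⟩
  | .arrow ρ τ, S, f, hf => fun a => infEl_le τ ⟨f, hf, rfl⟩

theorem le_infEl : ∀ (σ : Ty) {S : Set (El σ)} {b}, S.Nonempty → (∀ x ∈ S, Le σ b x) →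
    Le σ b (infEl σ S)
  | .base, S, b, hne, hb => by
    show b ≤ infOm S
    rw [← Subtype.coe_le_coe]
    exact le_csInf (hne.image _) (by rintro _ ⟨y, hy, rfl⟩; exact hb y hy)
  | .arrow ρ τ, S, b, hne, hb => fun a =>
    le_infEl τ (hne.image _) (by rintro _ ⟨f, hf, rfl⟩; exact hb f hf a)

theorem le_limsupEl' (σ : Ty) {ζ : Ordinal} {u : ∀ ξ : Ordinal, ξ < ζ → El σ} {b : El σ}
    {γ₀ : Ordinal} (hγ₀ : γ₀ < ζ) (hζ : ζ < ω₁)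
    (hb : ∀ ξ (h : ξ < ζ), γ₀ ≤ ξ → Le σ b (u ξ h)) :
    Le σ b (limsupEl σ ζ u) := by
  rw [limsupEl_eq]
  refine le_infEl σ ⟨_, ⟨γ₀, hγ₀, rfl⟩⟩ ?_
  rintro _ ⟨γ, hγ, rfl⟩
  have hm : max γ γ₀ < ζ := max_lt hγ hγ₀
  exact le_trans' σ (hb _ hm (le_max_right _ _))
    (le_supEl σ (tails_countable hζ) ⟨max γ γ₀, hm, le_max_left _ _, rfl⟩)

theorem limsupEl_le' (σ : Ty) {ζ : Ordinal} {u : ∀ ξ : Ordinal, ξ < ζ → El σ} {b : El σ}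
    {γ₀ : Ordinal} (hγ₀ : γ₀ < ζ)
    (hb : ∀ ξ (h : ξ < ζ), γ₀ ≤ ξ → Le σ (u ξ h) b) :
    Le σ (limsupEl σ ζ u) b := by
  rw [limsupEl_eq]
  refine le_trans' σ (infEl_le σ ⟨γ₀, hγ₀, rfl⟩) (supEl_le σ ?_)
  rintro _ ⟨ξ, h, hγξ, rfl⟩
  exact hb ξ h hγξ

theorem image_tails {ρ τ : Ty} {ζ : Ordinal} {u : ∀ ξ : Ordinal, ξ < ζ → El (.arrow ρ τ)}
    {γ : Ordinal} (a : El ρ) :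
    (fun f : El (.arrow ρ τ) => f a) '' tails (.arrow ρ τ) ζ u γ =
      tails τ ζ (fun ξ h => u ξ h a) γ := by
  ext z
  simp only [tails, Set.mem_image, Set.mem_setOf_eq]
  constructor
  · rintro ⟨w, ⟨ξ, h, hγ, rfl⟩, rfl⟩; exact ⟨ξ, h, hγ, rfl⟩
  · rintro ⟨ξ, h, hγ, rfl⟩; exact ⟨u ξ h, ⟨ξ, h, hγ, rfl⟩, rfl⟩

theorem limsupEl_apply {ρ τ : Ty} {ζ : Ordinal} {u : ∀ ξ : Ordinal, ξ < ζ → El (.arrow ρ τ)}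
    (a : El ρ) :
    limsupEl (.arrow ρ τ) ζ u a = limsupEl τ ζ (fun ξ h => u ξ h a) := by
  have h1 : ∀ γ, (fun f : El (.arrow ρ τ) => f a) '' tails (.arrow ρ τ) ζ u γ
      = tails τ ζ (fun ξ h => u ξ h a) γ := fun γ => image_tails a
  show infEl τ ((fun f : El (.arrow ρ τ) => f a) ''
      {y | ∃ γ, ∃ _ : γ < ζ, y = supEl (.arrow ρ τ) (tails (.arrow ρ τ) ζ u γ)})
    = infEl τ {y | ∃ γ, ∃ _ : γ < ζ, y = supEl τ (tails τ ζ (fun ξ h => u ξ h a) γ)}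
  congr 1
  ext y
  simp only [Set.mem_image, Set.mem_setOf_eq]
  constructor
  · rintro ⟨w, ⟨γ, hγ, rfl⟩, rfl⟩
    exact ⟨γ, hγ, by rw [← h1 γ]; rfl⟩
  · rintro ⟨γ, hγ, rfl⟩
    exact ⟨supEl (.arrow ρ τ) (tails (.arrow ρ τ) ζ u γ), ⟨γ, hγ, rfl⟩, by rw [← h1 γ]; rfl⟩

theorem hpLe_limsupEl' : ∀ (σ : Ty) {ζ : Ordinal} {u : ∀ ξ : Ordinal, ξ < ζ → El σ}
    {b : El σ} {γ₀ : Ordinal}, γ₀ < ζ → ζ < ω₁ →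
    (∀ ξ (h : ξ < ζ), γ₀ ≤ ξ → HpLe σ b (u ξ h)) → HpLe σ b (limsupEl σ ζ u)
  | .base, ζ, u, b, γ₀, hγ₀, hζ, hb => le_limsupEl' .base hγ₀ hζ hb
  | .arrow ρ τ, ζ, u, b, γ₀, hγ₀, hζ, hb => by
    by_cases hρτ : ρ = τ
    · subst hρτ
      rw [hpLe_arrow_iff]
      intro a ha
      rw [limsupEl_apply]
      exact hpLe_limsupEl' ρ hγ₀ hζ (fun ξ h hγξ => hpLe_arrow_iff.1 (hb ξ h hγξ) a ha)
    · rw [hpLe_arrow_ne hρτ]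
      exact le_limsupEl' _ hγ₀ hζ (fun ξ h hγξ => (hpLe_arrow_ne hρτ).1 (hb ξ h hγξ))

theorem limsupEl_hpLe' : ∀ (σ : Ty) {ζ : Ordinal} {u : ∀ ξ : Ordinal, ξ < ζ → El σ}
    {b : El σ} {γ₀ : Ordinal}, γ₀ < ζ →
    (∀ ξ (h : ξ < ζ), γ₀ ≤ ξ → HpLe σ (u ξ h) b) → HpLe σ (limsupEl σ ζ u) b
  | .base, ζ, u, b, γ₀, hγ₀, hb => limsupEl_le' .base hγ₀ hb
  | .arrow ρ τ, ζ, u, b, γ₀, hγ₀, hb => by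
    by_cases hρτ : ρ = τ
    · subst hρτ
      rw [hpLe_arrow_iff]
      intro a ha
      rw [limsupEl_apply]
      exact limsupEl_hpLe' ρ hγ₀ (fun ξ h hγξ => hpLe_arrow_iff.1 (hb ξ h hγξ) a ha)
    · rw [hpLe_arrow_ne hρτ]
      exact limsupEl_le' _ hγ₀ (fun ξ h hγξ => (hpLe_arrow_ne hρτ).1 (hb ξ h hγξ))

theorem hpLe_limsup_self (σ : Ty) {ζ : Ordinal} {u : ∀ ξ : Ordinal, ξ < ζ → El σ}
    (hζ : ζ < ω₁)
    (mono : ∀ ξ ξ' (h : ξ < ζ) (h' : ξ' < ζ), ξ ≤ ξ' → HpLe σ (u ξ h) (u ξ' h'))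
    (ξ : Ordinal) (h : ξ < ζ) : HpLe σ (u ξ h) (limsupEl σ ζ u) :=
  hpLe_limsupEl' σ h hζ (fun ξ' h' hle => mono ξ ξ' h h' hle)

theorem limsupEl_hp : ∀ (σ : Ty) {ζ : Ordinal} {u : ∀ ξ : Ordinal, ξ < ζ → El σ},
    0 < ζ → ζ < ω₁ → (∀ ξ (h : ξ < ζ), Hp σ (u ξ h)) →
    (∀ ξ ξ' (h : ξ < ζ) (h' : ξ' < ζ), ξ ≤ ξ' → HpLe σ (u ξ h) (u ξ' h')) →
    Hp σ (limsupEl σ ζ u)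
  | .base, _, _, _, _, _, _ => trivial
  | .arrow ρ τ, ζ, u, h0, hζ, hp, mono => by
    by_cases hρτ : ρ = τ
    · subst hρτ
      rw [hp_arrow_iff]
      refine ⟨?_, ?_, ?_⟩
      · intro a ha
        rw [limsupEl_apply]
        exact limsupEl_hp ρ h0 hζ (fun ξ h => (hp ξ h).maps ha)
          (fun ξ ξ' h h' hle => hpLe_arrow_iff.1 (mono ξ ξ' h h' hle) a ha)
      · intro a ha
        rw [limsupEl_apply]
        exact hpLe_limsupEl' ρ h0 hζ (fun ξ h _ => (hp ξ h).infl ha)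
      · intro a a' ha ha' haa
        rw [limsupEl_apply (u := u) a, limsupEl_apply (u := u) a']
        refine limsupEl_hpLe' ρ h0 (fun ξ h _ => hpLe_trans ρ ((hp ξ h).mono ha ha' haa) ?_)
        exact hpLe_limsup_self ρ hζ
          (fun ξ₁ ξ₂ h₁ h₂ hle => hpLe_arrow_iff.1 (mono ξ₁ ξ₂ h₁ h₂ hle) a' ha') ξ h
    · exact hp_arrow_ne hρτ _
/-! ### Basic properties of `Iter` -/

theorem iter_zero (σ : Ty) (f : El σ → El σ) (x : El σ) : Iter σ 0 f x = x := by
  unfold Iter; rw [Ordinal.limitRecOn_zero]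

theorem iter_succ (σ : Ty) (β : Ordinal) (f : El σ → El σ) (x : El σ) :
    Iter σ (Order.succ β) f x = f (Iter σ β f x) := by
  unfold Iter; rw [Ordinal.limitRecOn_succ]

theorem iter_limit (σ : Ty) {μ : Ordinal} (h : Order.IsSuccLimit μ) (f : El σ → El σ) (x : El σ) :
    Iter σ μ f x = limsupEl σ μ (fun ξ _ => Iter σ ξ f x) := by
  unfold Iter; rw [Ordinal.limitRecOn_limit _ _ _ _ h]

theorem iter_one (σ : Ty) (f : El σ → El σ) (x : El σ) : Iter σ 1 f x = f x := by
  rw [← Ordinal.succ_zero, iter_succ, iter_zero]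

theorem iter_q (σ : Ty) {f : El (.arrow σ σ)} (hf : Hp (.arrow σ σ) f) {x : El σ}
    (hx : Hp σ x) :
    ∀ β, β < ω₁ → Hp σ (Iter σ β f x) ∧
      ∀ ξ, ξ ≤ β → HpLe σ (Iter σ ξ f x) (Iter σ β f x) := by
  intro β
  induction β using Ordinal.induction with
  | _ β IH =>
  intro hβ
  rcases Ordinal.zero_or_succ_or_isSuccLimit β with rfl | ⟨β', rfl⟩ | hlim
  · constructor
    · rw [iter_zero]; exact hx
    · intro ξ hξ
      rw [nonpos_iff_eq_zero.1 hξ]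
      exact hpLe_refl σ _
  · have hs : β' < Order.succ β' := Order.lt_succ β'
    have hβ'ω : β' < ω₁ := lt_trans hs hβ
    have Q := IH β' hs hβ'ω
    constructor
    · rw [iter_succ]; exact hf.maps Q.1
    · intro ξ hξ
      rcases eq_or_lt_of_le hξ with rfl | hlt
      · exact hpLe_refl σ _
      · rw [iter_succ]
        exact hpLe_trans σ (Q.2 ξ (Order.lt_succ_iff.1 hlt)) (hf.infl Q.1)
  · have hterm : ∀ ξ (h : ξ < β), Hp σ (Iter σ ξ f x) :=
      fun ξ h => (IH ξ h (lt_trans h hβ)).1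
    have hmono : ∀ ξ ξ' (h : ξ < β) (h' : ξ' < β), ξ ≤ ξ' →
        HpLe σ (Iter σ ξ f x) (Iter σ ξ' f x) :=
      fun ξ ξ' h h' hle => (IH ξ' h' (lt_trans h' hβ)).2 ξ hle
    constructor
    · rw [iter_limit σ hlim]
      exact limsupEl_hp σ hlim.pos hβ hterm hmono
    · intro ξ hξ
      rcases eq_or_lt_of_le hξ with rfl | hlt
      · exact hpLe_refl σ _
      · rw [iter_limit σ hlim]
        exact hpLe_limsup_self σ hβ hmono ξ hlt

theorem iter_hp (σ : Ty) {f : El (.arrow σ σ)} (hf : Hp (.arrow σ σ) f) {x : El σ}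
    (hx : Hp σ x) {β : Ordinal} (hβ : β < ω₁) : Hp σ (Iter σ β f x) :=
  (iter_q σ hf hx β hβ).1

theorem iter_mono_ord (σ : Ty) {f : El (.arrow σ σ)} (hf : Hp (.arrow σ σ) f) {x : El σ}
    (hx : Hp σ x) {ξ β : Ordinal} (hle : ξ ≤ β) (hβ : β < ω₁) :
    HpLe σ (Iter σ ξ f x) (Iter σ β f x) :=
  (iter_q σ hf hx β hβ).2 ξ hle

theorem iter_mono_arg (σ : Ty) {f : El (.arrow σ σ)} (hf : Hp (.arrow σ σ) f) :
    ∀ β, β < ω₁ → ∀ {x y : El σ}, Hp σ x → Hp σ y → HpLe σ x y →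
      HpLe σ (Iter σ β f x) (Iter σ β f y) := by
  intro β
  induction β using Ordinal.induction with
  | _ β IH =>
  intro hβ x y hx hy hxy
  rcases Ordinal.zero_or_succ_or_isSuccLimit β with rfl | ⟨β', rfl⟩ | hlim
  · rw [iter_zero, iter_zero]; exact hxy
  · have hs : β' < Order.succ β' := Order.lt_succ β'
    rw [iter_succ, iter_succ]
    exact hf.mono (iter_hp σ hf hx (lt_trans hs hβ)) (iter_hp σ hf hy (lt_trans hs hβ))
      (IH β' hs (lt_trans hs hβ) hx hy hxy)
  · rw [iter_limit σ hlim, iter_limit σ hlim]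
    refine limsupEl_hpLe' σ hlim.pos
      (fun ξ h _ => hpLe_trans σ (IH ξ h (lt_trans h hβ) hx hy hxy) ?_)
    exact hpLe_limsup_self σ hβ
      (fun ξ₁ ξ₂ h₁ h₂ hle => iter_mono_ord σ hf hy hle (lt_trans h₂ hβ)) ξ h

theorem iter_hp_fun (σ : Ty) {f : El (.arrow σ σ)} (hf : Hp (.arrow σ σ) f) {β : Ordinal}
    (hβ : β < ω₁) : Hp (.arrow σ σ) (Iter σ β f) :=
  hp_arrow_iff.2 ⟨fun x hx => iter_hp σ hf hx hβ,
    fun x hx => by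
      have h := iter_mono_ord σ hf hx (zero_le : 0 ≤ β) hβ
      rwa [iter_zero] at h,
    fun x y hx hy hxy => iter_mono_arg σ hf β hβ hx hy hxy⟩

theorem iter_mono_fun (σ : Ty) : ∀ β, β < ω₁ → ∀ {f g : El (.arrow σ σ)},
    Hp (.arrow σ σ) f → Hp (.arrow σ σ) g → HpLe (.arrow σ σ) f g →
    ∀ {x : El σ}, Hp σ x → HpLe σ (Iter σ β f x) (Iter σ β g x) := by
  intro β
  induction β using Ordinal.induction with
  | _ β IH =>
  intro hβ f g hf hg hfg x hx
  rcases Ordinal.zero_or_succ_or_isSuccLimit β with rfl | ⟨β', rfl⟩ | hlim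
  · rw [iter_zero, iter_zero]; exact hpLe_refl σ x
  · have hs : β' < Order.succ β' := Order.lt_succ β'
    rw [iter_succ, iter_succ]
    have h1 : HpLe σ (f (Iter σ β' f x)) (f (Iter σ β' g x)) :=
      hf.mono (iter_hp σ hf hx (lt_trans hs hβ)) (iter_hp σ hg hx (lt_trans hs hβ))
        (IH β' hs (lt_trans hs hβ) hf hg hfg hx)
    have h2 : HpLe σ (f (Iter σ β' g x)) (g (Iter σ β' g x)) :=
      hpLe_arrow_iff.1 hfg _ (iter_hp σ hg hx (lt_trans hs hβ))
    exact hpLe_trans σ h1 h2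
  · rw [iter_limit σ hlim, iter_limit σ hlim]
    refine limsupEl_hpLe' σ hlim.pos
      (fun ξ h _ => hpLe_trans σ (IH ξ h (lt_trans h hβ) hf hg hfg hx) ?_)
    exact hpLe_limsup_self σ hβ
      (fun ξ₁ ξ₂ h₁ h₂ hle => iter_mono_ord σ hg hx hle (lt_trans h₂ hβ)) ξ h

theorem iterFun_hp (σ : Ty) {γ : Ordinal} (h1 : 1 ≤ γ) (hγ : γ < ω₁) :
    Hp (.arrow (.arrow σ σ) (.arrow σ σ)) (Iter σ γ) :=
  hp_arrow_iff.2 ⟨fun g hg => iter_hp_fun σ hg hγ,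
    fun g hg => hpLe_arrow_iff.2 fun x hx => by
      have h := iter_mono_ord σ hg hx h1 hγ
      rwa [iter_one] at h,
    fun g g' hg hg' hle => hpLe_arrow_iff.2 fun x hx => iter_mono_fun σ γ hγ hg hg' hle hx⟩

theorem limsup_hpLe_limsup {σ : Ty} {ζ ζ' : Ordinal} {u : ∀ ξ : Ordinal, ξ < ζ → El σ}
    {v : ∀ η : Ordinal, η < ζ' → El σ} (h0 : 0 < ζ) (hζ' : ζ' < ω₁)
    (hv : ∀ η η' (h : η < ζ') (h' : η' < ζ'), η ≤ η' → HpLe σ (v η h) (v η' h'))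
    (dom : ∀ ξ (h : ξ < ζ), ∃ η, ∃ h' : η < ζ', HpLe σ (u ξ h) (v η h')) :
    HpLe σ (limsupEl σ ζ u) (limsupEl σ ζ' v) :=
  limsupEl_hpLe' σ h0 (fun ξ h _ => by
    obtain ⟨η, h', hle⟩ := dom ξ h
    exact hpLe_trans σ hle (hpLe_limsup_self σ hζ' hv η h'))

theorem iter_id (σ : Ty) {f : El (.arrow σ σ)} {x : El σ} (hx : Hp σ x) :
    ∀ δ, δ < ω₁ → HpEq σ (Iter σ δ (Iter σ 0 f) x) x := by
  intro δ
  induction δ using Ordinal.induction with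
  | _ δ IH =>
  intro hδ
  rcases Ordinal.zero_or_succ_or_isSuccLimit δ with rfl | ⟨δ', rfl⟩ | hlim
  · rw [iter_zero]; exact hpEq_refl x
  · rw [iter_succ, iter_zero]
    exact IH δ' (Order.lt_succ δ') (lt_trans (Order.lt_succ δ') hδ)
  · rw [iter_limit σ hlim]
    have hterm : ∀ ξ (h : ξ < δ), HpEq σ (Iter σ ξ (Iter σ 0 f) x) x :=
      fun ξ h => IH ξ h (lt_trans h hδ)
    constructor
    · exact limsupEl_hpLe' σ hlim.pos (fun ξ h _ => (hterm ξ h).1)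
    · exact hpLe_limsupEl' σ hlim.pos hδ (fun ξ h _ => (hterm ξ h).2)

theorem iter_add (σ : Ty) {f : El (.arrow σ σ)} (hf : Hp (.arrow σ σ) f) {x : El σ}
    (hx : Hp σ x) : ∀ δ, δ < ω₁ → ∀ β, β < ω₁ →
      HpEq σ (Iter σ (β + δ) f x) (Iter σ δ f (Iter σ β f x)) := by
  intro δ
  induction δ using Ordinal.induction with
  | _ δ IH =>
  intro hδ β hβ
  rcases Ordinal.zero_or_succ_or_isSuccLimit δ with rfl | ⟨δ', rfl⟩ | hlim
  · rw [add_zero, iter_zero]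
    exact hpEq_refl _
  · have hs : δ' < Order.succ δ' := Order.lt_succ δ'
    have hδ' : δ' < ω₁ := lt_trans hs hδ
    rw [Ordinal.add_succ, iter_succ, iter_succ]
    exact hp_congr hf (iter_hp σ hf hx (add_lt_om1 hβ hδ'))
      (iter_hp σ hf (iter_hp σ hf hx hβ) hδ') (IH δ' hs hδ' β hβ)
  · have hadd : Order.IsSuccLimit (β + δ) := Ordinal.isSuccLimit_add β hlim
    have hβδ : β + δ < ω₁ := add_lt_om1 hβ hδ
    have hxβ : Hp σ (Iter σ β f x) := iter_hp σ hf hx hβ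
    rw [iter_limit σ hadd, iter_limit σ hlim]
    have humono : ∀ η η' (h : η < β + δ) (h' : η' < β + δ), η ≤ η' →
        HpLe σ (Iter σ η f x) (Iter σ η' f x) :=
      fun η η' h h' hle => iter_mono_ord σ hf hx hle (lt_trans h' hβδ)
    have hvmono : ∀ ξ ξ' (h : ξ < δ) (h' : ξ' < δ), ξ ≤ ξ' →
        HpLe σ (Iter σ ξ f (Iter σ β f x)) (Iter σ ξ' f (Iter σ β f x)) :=
      fun ξ ξ' h h' hle => iter_mono_ord σ hf hxβ hle (lt_trans h' hδ)
    constructor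
    · refine limsup_hpLe_limsup hadd.pos hδ hvmono (fun η h => ?_)
      obtain ⟨ξ, hξδ, hηβξ⟩ := (Ordinal.lt_add_iff_of_isSuccLimit hlim).1 h
      refine ⟨ξ, hξδ, ?_⟩
      have h1 : HpLe σ (Iter σ η f x) (Iter σ (β + ξ) f x) :=
        iter_mono_ord σ hf hx hηβξ.le (add_lt_om1 hβ (lt_trans hξδ hδ))
      exact hpLe_trans σ h1 (IH ξ hξδ (lt_trans hξδ hδ) β hβ).1
    · refine limsup_hpLe_limsup hlim.pos hβδ humono (fun ξ h => ?_)
      exact ⟨β + ξ, (add_lt_add_iff_left β).2 h, (IH ξ h (lt_trans h hδ) β hβ).2⟩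

theorem iter_mul (σ : Ty) {f : El (.arrow σ σ)} (hf : Hp (.arrow σ σ) f) {x : El σ}
    (hx : Hp σ x) : ∀ δ, δ < ω₁ → ∀ β, β < ω₁ →
      HpEq σ (Iter σ (β * δ) f x) (Iter σ δ (Iter σ β f) x) := by
  intro δ
  induction δ using Ordinal.induction with
  | _ δ IH =>
  intro hδ β hβ
  rcases Ordinal.zero_or_succ_or_isSuccLimit δ with rfl | ⟨δ', rfl⟩ | hlim
  · rw [mul_zero, iter_zero, iter_zero]; exact hpEq_refl x
  · have hs : δ' < Order.succ δ' := Order.lt_succ δ'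
    have hδ' : δ' < ω₁ := lt_trans hs hδ
    rw [Ordinal.mul_succ, iter_succ]
    refine (iter_add σ hf hx β hβ (β * δ') (mul_lt_om1 hβ hδ')).trans ?_
    exact hp_congr (iter_hp_fun σ hf hβ) (iter_hp σ hf hx (mul_lt_om1 hβ hδ'))
      (iter_hp σ (iter_hp_fun σ hf hβ) hx hδ') (IH δ' hs hδ' β hβ)
  · rcases eq_or_ne β 0 with rfl | hβ0
    · rw [zero_mul, iter_zero]
      exact (iter_id σ hx δ hδ).symm
    · have hβpos : 0 < β := pos_iff_ne_zero.2 hβ0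
      have hml : Order.IsSuccLimit (β * δ) := Ordinal.isSuccLimit_mul_right hβpos hlim
      have hβδ : β * δ < ω₁ := mul_lt_om1 hβ hδ
      have hg : Hp (.arrow σ σ) (Iter σ β f) := iter_hp_fun σ hf hβ
      rw [iter_limit σ hml, iter_limit σ hlim]
      have humono : ∀ η η' (h : η < β * δ) (h' : η' < β * δ), η ≤ η' →
          HpLe σ (Iter σ η f x) (Iter σ η' f x) :=
        fun η η' h h' hle => iter_mono_ord σ hf hx hle (lt_trans h' hβδ)
      have hvmono : ∀ ξ ξ' (h : ξ < δ) (h' : ξ' < δ), ξ ≤ ξ' →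
          HpLe σ (Iter σ ξ (Iter σ β f) x) (Iter σ ξ' (Iter σ β f) x) :=
        fun ξ ξ' h h' hle => iter_mono_ord σ hg hx hle (lt_trans h' hδ)
      constructor
      · refine limsup_hpLe_limsup hml.pos hδ hvmono (fun η h => ?_)
        obtain ⟨ξ, hξδ, hlt⟩ := (Ordinal.lt_mul_iff_of_isSuccLimit hlim).1 h
        exact ⟨ξ, hξδ, hpLe_trans σ
          (iter_mono_ord σ hf hx hlt.le (mul_lt_om1 hβ (lt_trans hξδ hδ)))
          (IH ξ hξδ (lt_trans hξδ hδ) β hβ).1⟩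
      · refine limsup_hpLe_limsup hlim.pos hβδ humono (fun ξ h => ?_)
        exact ⟨β * ξ, mul_lt_mul_of_pos_left h hβpos,
          (IH ξ h (lt_trans h hδ) β hβ).2⟩
/-! ### The main theorem -/

theorem iter_zfun (τ : Ty) {g : El (.arrow τ τ)} {x : El τ} (hg : Hp (.arrow τ τ) g)
    (hx : Hp τ x) : ∀ α, α < ω₁ → α ≠ 0 →
      HpEq τ (Iter (.arrow τ τ) α (Iter τ 0) g x) x := by
  intro α
  induction α using Ordinal.induction with
  | _ α IH =>
  intro hα hα0
  rcases Ordinal.zero_or_succ_or_isSuccLimit α with rfl | ⟨α', rfl⟩ | hlim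
  · exact absurd rfl hα0
  · rw [iter_succ (.arrow τ τ) α' (Iter τ 0) g, iter_zero τ _ x]
    exact hpEq_refl x
  · rw [iter_limit (.arrow τ τ) hlim (Iter τ 0) g, limsupEl_apply x]
    have hterm : ∀ ξ (h : ξ < α), 1 ≤ ξ →
        HpEq τ (Iter (.arrow τ τ) ξ (Iter τ 0) g x) x :=
      fun ξ h h1 => IH ξ h (lt_trans h hα) (Ordinal.one_le_iff_ne_zero.1 h1)
    constructor
    · exact limsupEl_hpLe' τ (Ordinal.one_lt_of_isSuccLimit hlim) (fun ξ h h1 => (hterm ξ h h1).1)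
    · exact hpLe_limsupEl' τ (Ordinal.one_lt_of_isSuccLimit hlim) hα (fun ξ h h1 => (hterm ξ h h1).2)

theorem main_pos (τ : Ty) {γ : Ordinal} (h1 : 1 ≤ γ) (hγ : γ < ω₁) :
    ∀ α, α < ω₁ → HpEq (.arrow (.arrow τ τ) (.arrow τ τ))
      (Iter (.arrow τ τ) α (Iter τ γ)) (Iter τ (γ ^ α)) := by
  intro α
  induction α using Ordinal.induction with
  | _ α IH =>
  intro hα
  have hF : Hp (.arrow (.arrow τ τ) (.arrow τ τ)) (Iter τ γ) := iterFun_hp τ h1 hγ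
  rcases Ordinal.zero_or_succ_or_isSuccLimit α with rfl | ⟨α', rfl⟩ | hlim
  · rw [Ordinal.opow_zero]
    constructor <;> refine hpLe_arrow_iff.2 fun g hg => hpLe_arrow_iff.2 fun x hx => ?_ <;>
      rw [iter_zero, iter_one] <;> exact hpLe_refl τ _
  · have hs : α' < Order.succ α' := Order.lt_succ α'
    have hα' : α' < ω₁ := lt_trans hs hα
    have hopow : γ ^ α' < ω₁ := opow_lt_om1 hγ hα'
    have IH' := IH α' hs hα'
    rw [Ordinal.opow_succ]
    constructor <;> refine hpLe_arrow_iff.2 fun g hg => hpLe_arrow_iff.2 fun x hx => ?_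
    all_goals {
      have hA : Hp (.arrow τ τ) (Iter (.arrow τ τ) α' (Iter τ γ) g) :=
        iter_hp (.arrow τ τ) hF hg hα'
      have hB : Hp (.arrow τ τ) (Iter τ (γ ^ α') g) := iter_hp_fun τ hg hopow
      have e1 : HpEq (.arrow τ τ) (Iter (.arrow τ τ) α' (Iter τ γ) g) (Iter τ (γ ^ α') g) :=
        ⟨hpLe_arrow_iff.1 IH'.1 g hg, hpLe_arrow_iff.1 IH'.2 g hg⟩
      have e2 : HpEq (.arrow τ τ)
          (Iter τ γ (Iter (.arrow τ τ) α' (Iter τ γ) g)) (Iter τ γ (Iter τ (γ ^ α') g)) :=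
        hp_congr hF hA hB e1
      have e3 := iter_mul τ hg hx γ hγ (γ ^ α') hopow
      rw [iter_succ (.arrow τ τ) α' (Iter τ γ) g]
      first
      | exact hpLe_trans τ (hpLe_arrow_iff.1 e2.1 x hx) e3.2
      | exact hpLe_trans τ e3.1 (hpLe_arrow_iff.1 e2.2 x hx)
    }
  · have hαpos : 0 < α := hlim.pos
    rcases eq_or_lt_of_le h1 with rfl | hγ1
    · rw [Ordinal.one_opow]
      constructor <;> refine hpLe_arrow_iff.2 fun g hg => hpLe_arrow_iff.2 fun x hx => ?_
      all_goals {
        have hterm : ∀ ξ (h : ξ < α),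
            HpEq τ (Iter (.arrow τ τ) ξ (Iter τ 1) g x) (Iter τ 1 g x) := by
          intro ξ h
          have e := IH ξ h (lt_trans h hα)
          rw [Ordinal.one_opow] at e
          exact ⟨hpLe_arrow_iff.1 (hpLe_arrow_iff.1 e.1 g hg) x hx,
            hpLe_arrow_iff.1 (hpLe_arrow_iff.1 e.2 g hg) x hx⟩
        rw [iter_limit (.arrow τ τ) hlim (Iter τ 1) g, limsupEl_apply x]
        first
        | exact limsupEl_hpLe' τ hαpos (fun ξ h _ => (hterm ξ h).1)
        | exact hpLe_limsupEl' τ hαpos hα (fun ξ h _ => (hterm ξ h).2)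
      }
    · have hγ0 : γ ≠ 0 := (lt_trans zero_lt_one hγ1).ne'
      have hop : Order.IsSuccLimit (γ ^ α) := Ordinal.isSuccLimit_opow hγ1 hlim
      have hopω : γ ^ α < ω₁ := opow_lt_om1 hγ hα
      constructor <;> refine hpLe_arrow_iff.2 fun g hg => hpLe_arrow_iff.2 fun x hx => ?_
      all_goals
        rw [iter_limit (.arrow τ τ) hlim (Iter τ γ) g, limsupEl_apply x,
          iter_limit τ hop g x]
      · -- limsup over α of LHS ≤ limsup over γ^α of RHS
        refine limsup_hpLe_limsup hαpos hopω
          (fun η η' h h' hle => iter_mono_ord τ hg hx hle (lt_trans h' hopω))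
          (fun ξ h => ?_)
        refine ⟨γ ^ ξ, (Ordinal.opow_lt_opow_iff_right hγ1).2 h, ?_⟩
        exact hpLe_arrow_iff.1 (hpLe_arrow_iff.1 (IH ξ h (lt_trans h hα)).1 g hg) x hx
      · refine limsup_hpLe_limsup hop.pos hα
          (fun ξ ξ' h h' hle =>
            hpLe_arrow_iff.1 (iter_mono_ord (.arrow τ τ) hF hg hle (lt_trans h' hα)) x hx)
          (fun η h => ?_)
        obtain ⟨ξ, hξα, hlt⟩ := (Ordinal.lt_opow_of_isSuccLimit hγ0 hlim).1 h
        refine ⟨ξ, hξα, hpLe_trans τ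
          (iter_mono_ord τ hg hx hlt.le (opow_lt_om1 hγ (lt_trans hξα hα))) ?_⟩
        exact hpLe_arrow_iff.1 (hpLe_arrow_iff.1 (IH ξ hξα (lt_trans hξα hα)).2 g hg) x hx

/-- For every finite type `τ` and countable ordinals `α`, `γ`:
`Iter_α^{τ→τ} (Iter_γ^τ) =hp Iter_{γ^α}^τ`. -/
theorem iter_iterFun_hpEq_iter_opow (τ : Ty) (α γ : Ordinal) (hα : α < ω₁) (hγ : γ < ω₁) :
    HpEq (.arrow (.arrow τ τ) (.arrow τ τ))
      (Iter (.arrow τ τ) α (Iter τ γ)) (Iter τ (γ ^ α)) := by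
  rcases eq_or_ne γ 0 with rfl | hγ0
  · rcases eq_or_ne α 0 with rfl | hα0
    · rw [Ordinal.opow_zero]
      constructor <;> refine hpLe_arrow_iff.2 fun g hg => hpLe_arrow_iff.2 fun x hx => ?_ <;>
        rw [iter_zero, iter_one] <;> exact hpLe_refl τ _
    · rw [Ordinal.zero_opow hα0]
      constructor <;> refine hpLe_arrow_iff.2 fun g hg => hpLe_arrow_iff.2 fun x hx => ?_ <;>
        rw [iter_zero τ g x]
      · exact (iter_zfun τ hg hx α hα hα0).1
      · exact (iter_zfun τ hg hx α hα hα0).2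
  · exact main_pos τ (Ordinal.one_le_iff_ne_zero.2 hγ0) hγ α hα

end IterOrd
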